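/- Let A → B be a ring extension such that B is faithfully flat as a left A-module. Then the Amitsur complex 0 → A → B → B ⊗_A B → B ⊗_A B ⊗_A B → ⋯ with differentials d(x) = 1⊗x − x⊗1 on degree 0 and d(ω) = Σ_{i=0}^{n+1} (-1)^i (insertion of 1 in the i-th slot) in higher degrees, is exact. -/

import Mathlib

open TensorProduct

universe u

variable (A : Type u) [CommRing A] (B : Type u) [CommRing B] [Algebra A B]

/-- Iterated tensor powers: `T n = B^{⊗_A (n+1)}`, the degree-`n` term of the
Amitsur complex of `A → B`. -/
noncomputable def amitsurT : ℕ → ModuleCat.{u} A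
  | 0 => ModuleCat.of A B
  | n + 1 => ModuleCat.of A (B ⊗[A] (amitsurT n))

/-- Insertion of `1_B` into the `i`-th of the `n+2` tensor positions,
`T n → T (n+1)`. -/
noncomputable def amitsurIns : (n : ℕ) → Fin (n + 2) → (amitsurT A B n →ₗ[A] amitsurT A B (n + 1))
  | _, ⟨0, _⟩ => TensorProduct.mk A B _ 1
  | 0, ⟨1, _⟩ => (TensorProduct.mk A B B).flip 1
  | n + 1, ⟨k + 1, h⟩ => LinearMap.lTensor B (amitsurIns n ⟨k, by omega⟩)
  | 0, ⟨k + 2, h⟩ => absurd h (by omega)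

/-- The Amitsur differential `d : T n → T (n+1)`, the alternating sum of the
insertions of `1_B`; in degree `0` it is `x ↦ 1 ⊗ x − x ⊗ 1`. -/
noncomputable def amitsurD (n : ℕ) : amitsurT A B n →ₗ[A] amitsurT A B (n + 1) :=
  ∑ i : Fin (n + 2), ((-1 : ℤ) ^ (i : ℕ)) • amitsurIns A B n i

-- auxiliary
noncomputable def amitsurE (n : ℕ) : amitsurT A B n →ₗ[A] amitsurT A B (n + 1) :=
  TensorProduct.mk A B (amitsurT A B n) 1

lemma amitsurIns_zero (n : ℕ) : amitsurIns A B n ⟨0, by omega⟩ = amitsurE A B n := by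
  cases n <;> rfl

lemma amitsurIns_succ (n : ℕ) (k : Fin (n + 2)) :
    amitsurIns A B (n + 1) k.succ =
      (LinearMap.lTensor B (amitsurIns A B n k) :
        amitsurT A B (n + 1) →ₗ[A] amitsurT A B (n + 2)) := by
  rcases k with ⟨k, hk⟩
  cases n <;> rcases k with _ | _ | k <;> first | rfl | omega


/-- `lTensor` by `B`, viewed as a map between Amitsur terms. -/
noncomputable def amitsurLT (n m : ℕ) (f : amitsurT A B n →ₗ[A] amitsurT A B m) :
    amitsurT A B (n + 1) →ₗ[A] amitsurT A B (m + 1) :=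
  LinearMap.lTensor B f

lemma amitsurD_succ (n : ℕ) :
    amitsurD A B (n + 1) = amitsurE A B (n + 1) - amitsurLT A B _ _ (amitsurD A B n) := by
  rw [amitsurD, Fin.sum_univ_succ]
  have h0 : (((-1 : ℤ) ^ ((0 : Fin (n + 3)) : ℕ)) • amitsurIns A B (n + 1) 0)
      = amitsurE A B (n + 1) := by
    simpa using amitsurIns_zero A B (n + 1)
  rw [h0]
  have hs : ∀ i : Fin (n + 2),
      (((-1 : ℤ) ^ ((i.succ : Fin (n+3)) : ℕ)) • amitsurIns A B (n + 1) i.succ)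
      = -(((-1 : ℤ) ^ (i : ℕ)) • amitsurLT A B _ _ (amitsurIns A B n i)) := by
    intro i
    rw [show amitsurIns A B (n + 1) i.succ = amitsurLT A B _ _ (amitsurIns A B n i) from
      amitsurIns_succ A B n i]
    rw [Fin.val_succ, pow_succ]
    module
  rw [Finset.sum_congr rfl (fun i _ => hs i), Finset.sum_neg_distrib]
  have : amitsurLT A B n (n+1) (amitsurD A B n)
      = ∑ i : Fin (n + 2), ((-1 : ℤ) ^ (i : ℕ)) • amitsurLT A B _ _ (amitsurIns A B n i) := by
    rw [amitsurD, amitsurLT, ← LinearMap.coe_lTensorHom, map_sum]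
    exact Finset.sum_congr rfl fun i _ => map_zsmul _ _ _
  rw [this]
  abel

lemma amitsurLT_comp (n m k : ℕ) (f : amitsurT A B m →ₗ[A] amitsurT A B k)
    (g : amitsurT A B n →ₗ[A] amitsurT A B m) :
    amitsurLT A B m k f ∘ₗ amitsurLT A B n m g = amitsurLT A B n k (f ∘ₗ g) :=
  (LinearMap.lTensor_comp B f g).symm

lemma amitsurLT_zero (n m : ℕ) : amitsurLT A B n m 0 = 0 :=
  LinearMap.lTensor_zero B

lemma amitsurLT_sub (n m : ℕ) (f g : amitsurT A B n →ₗ[A] amitsurT A B m) :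
    amitsurLT A B n m (f - g) = amitsurLT A B n m f - amitsurLT A B n m g := by
  rw [amitsurLT, amitsurLT, amitsurLT, ← LinearMap.coe_lTensorHom, map_sub]
  rfl

lemma amitsurD_zero_eq : amitsurD A B 0 = amitsurE A B 0 - amitsurIns A B 0 1 := by
  rw [amitsurD, show (Finset.univ : Finset (Fin 2)) = {0, 1} from rfl,
    Finset.sum_insert (by decide), Finset.sum_singleton,
    show amitsurIns A B 0 0 = amitsurE A B 0 from amitsurIns_zero A B 0]
  simp
  abel

lemma amitsurE_comm (n m : ℕ) (f : amitsurT A B n →ₗ[A] amitsurT A B m) :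
    amitsurE A B m ∘ₗ f = amitsurLT A B n m f ∘ₗ amitsurE A B n := by
  ext x
  show (1 : B) ⊗ₜ[A] f x = LinearMap.lTensor B f ((1 : B) ⊗ₜ[A] x)
  rw [LinearMap.lTensor_tmul]

lemma amitsurD_comp_amitsurD (n : ℕ) :
    amitsurD A B (n + 1) ∘ₗ amitsurD A B n = 0 := by
  induction n with
  | zero =>
    rw [amitsurD_succ, LinearMap.sub_comp, amitsurE_comm A B 0 1, ← LinearMap.comp_sub,
      show amitsurE A B 0 - amitsurD A B 0 = amitsurIns A B 0 1 by
        rw [amitsurD_zero_eq]; abel]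
    ext x
    show LinearMap.lTensor B (amitsurD A B 0) (x ⊗ₜ[A] (1:B)) = 0
    erw [LinearMap.lTensor_tmul]
    have h1 : amitsurD A B 0 (1 : B) = 0 := by
      rw [amitsurD_zero_eq]
      show (1:B) ⊗ₜ[A] (1:B) - (1:B) ⊗ₜ[A] (1:B) = 0
      abel
    erw [h1, tmul_zero]
  | succ n ih =>
    rw [amitsurD_succ A B (n+1)]
    nth_rewrite 2 [amitsurD_succ A B n]
    rw [LinearMap.sub_comp, LinearMap.comp_sub, LinearMap.comp_sub,
      amitsurE_comm A B _ _ (amitsurE A B (n+1)),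
      amitsurE_comm A B _ _ (amitsurLT A B n (n+1) (amitsurD A B n)),
      amitsurLT_comp, ih, amitsurLT_zero,
      amitsurD_succ A B n, amitsurLT_sub, LinearMap.sub_comp]
    abel

/-- Homotopy `B ⊗ T (n+1) → B ⊗ T n`, multiplying the first two tensor factors. -/
noncomputable def amitsurH (n : ℕ) :
    B ⊗[A] (amitsurT A B (n + 1)) →ₗ[A] B ⊗[A] (amitsurT A B n) :=
  (LinearMap.rTensor (amitsurT A B n) (LinearMap.mul' A B)) ∘ₗ
    (TensorProduct.assoc A B B (amitsurT A B n)).symm.toLinearMap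

lemma amitsurH_lTensor_E (n : ℕ) :
    amitsurH A B n ∘ₗ LinearMap.lTensor B (amitsurE A B n) = LinearMap.id := by
  apply TensorProduct.ext'
  intro b x
  show (LinearMap.rTensor (amitsurT A B n) (LinearMap.mul' A B))
      ((TensorProduct.assoc A B B (amitsurT A B n)).symm (b ⊗ₜ[A] ((1:B) ⊗ₜ[A] x)))
      = b ⊗ₜ[A] x
  rw [TensorProduct.assoc_symm_tmul, LinearMap.rTensor_tmul, LinearMap.mul'_apply, mul_one]

lemma amitsurH_lTensor_LT (n m : ℕ) (f : amitsurT A B n →ₗ[A] amitsurT A B m) :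
    amitsurH A B m ∘ₗ LinearMap.lTensor B (amitsurLT A B n m f)
      = LinearMap.lTensor B f ∘ₗ amitsurH A B n := by
  apply TensorProduct.ext'
  intro b y
  show amitsurH A B m (LinearMap.lTensor B (LinearMap.lTensor B f) (b ⊗ₜ[A] y))
      = LinearMap.lTensor B f (amitsurH A B n (b ⊗ₜ[A] y))
  induction y using TensorProduct.induction_on with
  | zero => erw [tmul_zero]; simp; erw [map_zero]
  | tmul x w =>
    show (LinearMap.rTensor (amitsurT A B m) (LinearMap.mul' A B))
        ((TensorProduct.assoc A B B (amitsurT A B m)).symm (b ⊗ₜ[A] (x ⊗ₜ[A] f w)))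
        = LinearMap.lTensor B f ((LinearMap.rTensor (amitsurT A B n) (LinearMap.mul' A B))
          ((TensorProduct.assoc A B B (amitsurT A B n)).symm (b ⊗ₜ[A] (x ⊗ₜ[A] w))))
    rw [TensorProduct.assoc_symm_tmul, TensorProduct.assoc_symm_tmul,
      LinearMap.rTensor_tmul, LinearMap.rTensor_tmul, LinearMap.lTensor_tmul]
  | add y₁ y₂ h₁ h₂ =>
    erw [tmul_add, map_add, map_add, map_add, h₁, h₂]
    exact (map_add _ _ _).symm

lemma amitsurH_homotopy (n : ℕ) :
    amitsurH A B (n + 1) ∘ₗ LinearMap.lTensor B (amitsurD A B (n + 1)) +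
      LinearMap.lTensor B (amitsurD A B n) ∘ₗ amitsurH A B n = LinearMap.id := by
  rw [amitsurD_succ]
  have : (LinearMap.lTensor B (amitsurE A B (n+1) - amitsurLT A B n (n+1) (amitsurD A B n)) :
      B ⊗[A] amitsurT A B (n+1) →ₗ[A] B ⊗[A] amitsurT A B (n+2))
      = LinearMap.lTensor B (amitsurE A B (n+1)) -
        LinearMap.lTensor B (amitsurLT A B n (n+1) (amitsurD A B n)) := by
    rw [← LinearMap.coe_lTensorHom, map_sub]
  rw [this, LinearMap.comp_sub, amitsurH_lTensor_E, amitsurH_lTensor_LT]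
  abel

noncomputable def amitsurSig : B ⊗[A] B →ₗ[A] B ⊗[A] A :=
  ((TensorProduct.mk A B A).flip 1) ∘ₗ LinearMap.mul' A B

lemma amitsurSig_section :
    amitsurSig A B ∘ₗ LinearMap.lTensor B (Algebra.linearMap A B) = LinearMap.id := by
  apply TensorProduct.ext'
  intro b a
  show (b * algebraMap A B a) ⊗ₜ[A] (1 : A) = b ⊗ₜ[A] a
  rw [show b * algebraMap A B a = a • b from by rw [Algebra.smul_def, mul_comm], smul_tmul,
    smul_eq_mul, mul_one]

lemma amitsurH_homotopy_zero :
    amitsurH A B 0 ∘ₗ LinearMap.lTensor B (amitsurD A B 0) +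
      (LinearMap.lTensor B (Algebra.linearMap A B) ∘ₗ amitsurSig A B :
        B ⊗[A] (amitsurT A B 0) →ₗ[A] B ⊗[A] (amitsurT A B 0)) = LinearMap.id := by
  rw [amitsurD_zero_eq]
  have : (LinearMap.lTensor B (amitsurE A B 0 - amitsurIns A B 0 1) :
      B ⊗[A] amitsurT A B 0 →ₗ[A] B ⊗[A] amitsurT A B 1)
      = LinearMap.lTensor B (amitsurE A B 0) - LinearMap.lTensor B (amitsurIns A B 0 1) := by
    rw [← LinearMap.coe_lTensorHom, map_sub]
  rw [this, LinearMap.comp_sub, amitsurH_lTensor_E]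
  have h2 : (amitsurH A B 0 ∘ₗ LinearMap.lTensor B (amitsurIns A B 0 1) :
        B ⊗[A] B →ₗ[A] B ⊗[A] (amitsurT A B 0))
      = LinearMap.lTensor B (Algebra.linearMap A B) ∘ₗ amitsurSig A B := by
    apply TensorProduct.ext'
    intro b x
    show (LinearMap.rTensor (amitsurT A B 0) (LinearMap.mul' A B))
        ((TensorProduct.assoc A B B (amitsurT A B 0)).symm (b ⊗ₜ[A] (x ⊗ₜ[A] (1:B))))
        = LinearMap.lTensor B (Algebra.linearMap A B) ((b * x) ⊗ₜ[A] (1:A))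
    erw [TensorProduct.assoc_symm_tmul, LinearMap.rTensor_tmul, LinearMap.mul'_apply,
      LinearMap.lTensor_tmul]
    simp
    rfl
  erw [h2]
  exact sub_add_cancel (LinearMap.id : B ⊗[A] amitsurT A B 0 →ₗ[A] _) _

/-- If `B` is a faithfully flat `A`-algebra, the Amitsur complex
`0 → A → B → B ⊗_A B → B ⊗_A B ⊗_A B → ⋯` is exact. -/
theorem amitsur_complex_exact [Module.FaithfullyFlat A B] :
    Function.Injective (algebraMap A B) ∧
    Function.Exact (Algebra.linearMap A B) (amitsurD A B 0) ∧
    ∀ n : ℕ, Function.Exact (amitsurD A B n) (amitsurD A B (n + 1)) := by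
  refine ⟨?_, ?_, ?_⟩
  · rw [injective_iff_map_eq_zero]
    intro a ha
    have hf : LinearMap.lTensor B (LinearMap.toSpanSingleton A A a) = 0 := by
      apply TensorProduct.ext'
      intro b x
      show b ⊗ₜ[A] (x • a) = (0 : B ⊗[A] A)
      have hab : a • b = 0 := by rw [Algebra.smul_def, ha, zero_mul]
      have hba : b ⊗ₜ[A] a = (a • b) ⊗ₜ[A] (1 : A) := by
        rw [smul_tmul, smul_eq_mul, mul_one]
      rw [tmul_smul, hba, hab, zero_tmul, smul_zero]
    have h0 := (Module.FaithfullyFlat.zero_iff_lTensor_zero A B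
      (LinearMap.toSpanSingleton A A a)).mpr hf
    have h1 := DFunLike.congr_fun h0 (1 : A)
    simpa using h1
  · apply Module.FaithfullyFlat.lTensor_reflects_exact A B
    intro y
    constructor
    · intro hy
      refine ⟨amitsurSig A B y, ?_⟩
      have h := DFunLike.congr_fun (amitsurH_homotopy_zero A B) y
      have h2 : @id (B ⊗[A] B) (amitsurH A B 0 (LinearMap.lTensor B (amitsurD A B 0) y)) +
          LinearMap.lTensor B (Algebra.linearMap A B) (amitsurSig A B y) = y := h
      have hy' : LinearMap.lTensor B (amitsurD A B 0) y = 0 := hy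
      erw [hy', map_zero, id_eq, zero_add] at h2
      exact h2
    · rintro ⟨x, rfl⟩
      have hcomp : amitsurD A B 0 ∘ₗ Algebra.linearMap A B = 0 := by
        apply LinearMap.ext
        intro a
        rw [amitsurD_zero_eq]
        show (1 : B) ⊗ₜ[A] (algebraMap A B a) - (algebraMap A B a) ⊗ₜ[A] (1 : B) = 0
        rw [Algebra.algebraMap_eq_smul_one, tmul_smul, ← smul_tmul', sub_self]
      have h2 : LinearMap.lTensor B (amitsurD A B 0) ∘ₗ
          LinearMap.lTensor B (Algebra.linearMap A B) = 0 := by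
        erw [← LinearMap.lTensor_comp, hcomp, LinearMap.lTensor_zero]
      exact DFunLike.congr_fun h2 x
  · intro n
    apply Module.FaithfullyFlat.lTensor_reflects_exact A B
    intro y
    constructor
    · intro hy
      refine ⟨amitsurH A B n y, ?_⟩
      have h : amitsurH A B (n + 1) (LinearMap.lTensor B (amitsurD A B (n + 1)) y) +
          LinearMap.lTensor B (amitsurD A B n) (amitsurH A B n y) = y :=
        DFunLike.congr_fun (amitsurH_homotopy A B n) y
      rw [hy, map_zero, zero_add] at h
      exact h
    · rintro ⟨x, rfl⟩
      have h2 : LinearMap.lTensor B (amitsurD A B (n + 1)) ∘ₗ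
          LinearMap.lTensor B (amitsurD A B n) = 0 := by
        rw [← LinearMap.lTensor_comp, amitsurD_comp_amitsurD, LinearMap.lTensor_zero]
      exact DFunLike.congr_fun h2 x
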